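/- Let X be a Tychonoff space and Y₁, Y₂ extensions of X with compact remainders, with φᵢ : βX → βYᵢ the continuous extensions of id_X and F(Yᵢ) = { φᵢ^{-1}(p) : p ∈ Yᵢ \ X }. Then Y₁ ≤ Y₂ (there is a continuous map Y₂ → Y₁ fixing X pointwise) if and only if every member of F(Y₂) is contained in a member of F(Y₁). -/

import Mathlib

open Filter Topology Set

/-- For a completely regular T1 space, the Stone-Čech unit "reflects" neighborhoods. -/
lemma comap_stoneCechUnit_nhds_le {Y : Type} [TopologicalSpace Y] [T35Space Y] (q : Y) :
    Filter.comap (stoneCechUnit : Y → StoneCech Y) (𝓝 (stoneCechUnit q)) ≤ 𝓝 q := by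
  intro U hU
  obtain ⟨W, hWU, hWo, hqW⟩ := mem_nhds_iff.mp hU
  obtain ⟨g, hgc, hg0, hg1⟩ :=
    CompletelyRegularSpace.completely_regular q Wᶜ hWo.isClosed_compl (by simpa using hqW)
  refine Filter.mem_comap.mpr ⟨(stoneCechExtend hgc) ⁻¹' {(1 : unitInterval)}ᶜ, ?_, ?_⟩
  · refine IsOpen.mem_nhds (isOpen_compl_singleton.preimage (continuous_stoneCechExtend hgc)) ?_
    simp only [Set.mem_preimage, Set.mem_compl_iff, Set.mem_singleton_iff]
    have hq := congrFun (stoneCechExtend_extends hgc) q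
    simp only [Function.comp_apply] at hq
    rw [hq, hg0]
    exact zero_ne_one
  · intro y hy
    simp only [Set.mem_preimage, Set.mem_compl_iff, Set.mem_singleton_iff] at hy
    have hyq := congrFun (stoneCechExtend_extends hgc) y
    simp only [Function.comp_apply] at hyq
    rw [hyq] at hy
    by_contra hyU
    exact hy (hg1 (fun hyW => hyU (hWU hyW)))

lemma tendsto_of_stoneCechUnit_tendsto {α Y : Type} [TopologicalSpace Y] [T35Space Y]
    {F : Filter α} {g : α → Y} {q : Y}
    (h : Tendsto (stoneCechUnit ∘ g) F (𝓝 (stoneCechUnit q))) : Tendsto g F (𝓝 q) := by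
  have h1 : Filter.map g F ≤ Filter.comap stoneCechUnit (𝓝 (stoneCechUnit q)) := by
    rw [← Filter.map_le_iff_le_comap]
    rwa [Filter.map_map]
  exact h1.trans (comap_stoneCechUnit_nhds_le q)

/-- for extensions `Y₁, Y₂` of `X` with compact remainders, with
`φᵢ : βX → βYᵢ` extending `id_X` and `F(Yᵢ) = {φᵢ⁻¹(p) : p ∈ Yᵢ \ X}`, one has
`Y₁ ≤ Y₂` iff every member of `F(Y₂)` is contained in a member of `F(Y₁)`. -/
theorem stmt18 (X Y₁ Y₂ : Type) [TopologicalSpace X] [T35Space X]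
    [TopologicalSpace Y₁] [T35Space Y₁] [TopologicalSpace Y₂] [T35Space Y₂]
    (e₁ : X → Y₁) (he₁ : Topology.IsEmbedding e₁) (hd₁ : DenseRange e₁)
    (hc₁ : IsCompact (Set.range e₁)ᶜ)
    (e₂ : X → Y₂) (he₂ : Topology.IsEmbedding e₂) (hd₂ : DenseRange e₂)
    (hc₂ : IsCompact (Set.range e₂)ᶜ)
    (φ₁ : StoneCech X → StoneCech Y₁) (hφ₁ : Continuous φ₁)
    (hext₁ : φ₁ ∘ stoneCechUnit = stoneCechUnit ∘ e₁)
    (φ₂ : StoneCech X → StoneCech Y₂) (hφ₂ : Continuous φ₂)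
    (hext₂ : φ₂ ∘ stoneCechUnit = stoneCechUnit ∘ e₂) :
    (∃ f : Y₂ → Y₁, Continuous f ∧ f ∘ e₂ = e₁) ↔
      ∀ p : Y₂, p ∉ Set.range e₂ →
        ∃ q : Y₁, q ∉ Set.range e₁ ∧
          φ₂ ⁻¹' {stoneCechUnit p} ⊆ φ₁ ⁻¹' {stoneCechUnit q} := by
  constructor
  · rintro ⟨f, hf, hfe⟩ p hp
    refine ⟨f p, ?_, ?_⟩
    · -- f maps the remainder into the remainder
      rintro ⟨x, hx⟩
      apply hp
      have hcl : ClusterPt p (𝓟 (Set.range e₂)) :=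
        mem_closure_iff_clusterPt.mp (hd₂ p)
      set F := 𝓝 p ⊓ 𝓟 (Set.range e₂) with hF
      have hFne : F.NeBot := hcl
      have hmem : Set.range e₂ ∈ F := mem_inf_of_right (mem_principal_self _)
      have hmap : Filter.map e₂ (Filter.comap e₂ F) = F := Filter.map_comap_of_mem hmem
      have h1 : Filter.map e₁ (Filter.comap e₂ F) ≤ 𝓝 (e₁ x) := by
        have h2 : Filter.map f F ≤ 𝓝 (f p) :=
          ((hf.tendsto p).mono_left inf_le_left : Tendsto f F (𝓝 (f p)))
        calc Filter.map e₁ (Filter.comap e₂ F)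
            = Filter.map (f ∘ e₂) (Filter.comap e₂ F) := by rw [hfe]
          _ = Filter.map f (Filter.map e₂ (Filter.comap e₂ F)) := by rw [Filter.map_map]
          _ = Filter.map f F := by rw [hmap]
          _ ≤ 𝓝 (f p) := h2
          _ = 𝓝 (e₁ x) := by rw [hx]
      have hG : Filter.comap e₂ F ≤ 𝓝 x := by
        rw [he₁.toIsInducing.nhds_eq_comap x]
        exact le_trans Filter.le_comap_map (Filter.comap_mono h1)
      have hFle : F ≤ 𝓝 (e₂ x) := by
        calc F = Filter.map e₂ (Filter.comap e₂ F) := hmap.symm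
          _ ≤ Filter.map e₂ (𝓝 x) := Filter.map_mono hG
          _ ≤ 𝓝 (e₂ x) := he₂.continuous.tendsto x
      have hpe : p = e₂ x := by
        have : (𝓝 p ⊓ 𝓝 (e₂ x)).NeBot :=
          neBot_of_le (le_inf inf_le_left hFle)
        exact eq_of_nhds_neBot this
      exact ⟨x, hpe.symm⟩
    · -- the fiber inclusion via the Stone-Čech extension of f
      have hgc : Continuous (stoneCechUnit ∘ f) := continuous_stoneCechUnit.comp hf
      set g := stoneCechExtend hgc with hg
      have hcomm : g ∘ φ₂ = φ₁ := by
        apply denseRange_stoneCechUnit.equalizer ((continuous_stoneCechExtend hgc).comp hφ₂) hφ₁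
        calc (g ∘ φ₂) ∘ stoneCechUnit = g ∘ (φ₂ ∘ stoneCechUnit) := by rw [Function.comp_assoc]
          _ = g ∘ (stoneCechUnit ∘ e₂) := by rw [hext₂]
          _ = (g ∘ stoneCechUnit) ∘ e₂ := by rw [Function.comp_assoc]
          _ = (stoneCechUnit ∘ f) ∘ e₂ := by rw [stoneCechExtend_extends hgc]
          _ = stoneCechUnit ∘ (f ∘ e₂) := by rw [Function.comp_assoc]
          _ = stoneCechUnit ∘ e₁ := by rw [hfe]
          _ = φ₁ ∘ stoneCechUnit := hext₁.symm
      intro z hz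
      simp only [Set.mem_preimage, Set.mem_singleton_iff] at hz ⊢
      have hz1 : φ₁ z = g (φ₂ z) := (congrFun hcomm z).symm
      rw [hz1, hz]
      exact congrFun (stoneCechExtend_extends hgc) p
  · intro H
    classical
    -- φ₂ is surjective
    have hsurj : Function.Surjective φ₂ := by
      have hdr : DenseRange (φ₂ ∘ stoneCechUnit : X → StoneCech Y₂) := by
        rw [hext₂]
        exact denseRange_stoneCechUnit.comp hd₂ continuous_stoneCechUnit
      have hdr2 : DenseRange φ₂ := Dense.mono (Set.range_comp_subset_range _ _) hdr
      have hcl : IsClosed (Set.range φ₂) := (isCompact_range hφ₂).isClosed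
      intro z
      have : z ∈ closure (Set.range φ₂) := hdr2 z
      rwa [hcl.closure_eq] at this
    choose q hq1 hq2 using H
    -- the map f
    set f : Y₂ → Y₁ := fun y =>
      if h : y ∈ Set.range e₂ then e₁ h.choose else q y h with hfdef
    have hfe : f ∘ e₂ = e₁ := by
      funext x
      have h : e₂ x ∈ Set.range e₂ := ⟨x, rfl⟩
      simp only [hfdef, Function.comp_apply, dif_pos h]
      exact congrArg e₁ (he₂.injective h.choose_spec)
    -- the fiber-selecting map w
    set w : Y₂ → StoneCech X := fun y =>
      if h : y ∈ Set.range e₂ then stoneCechUnit h.choose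
      else (hsurj (stoneCechUnit y)).choose with hwdef
    have hw₂ : ∀ y, φ₂ (w y) = stoneCechUnit y := by
      intro y
      by_cases h : y ∈ Set.range e₂
      · simp only [hwdef, dif_pos h]
        have := congrFun hext₂ h.choose
        simp only [Function.comp_apply] at this
        rw [this, h.choose_spec]
      · simp only [hwdef, dif_neg h]
        exact (hsurj (stoneCechUnit y)).choose_spec
    have hw₁ : ∀ y, φ₁ (w y) = stoneCechUnit (f y) := by
      intro y
      by_cases h : y ∈ Set.range e₂
      · simp only [hwdef, hfdef, dif_pos h]
        have := congrFun hext₁ h.choose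
        simpa using this
      · have hmem : w y ∈ φ₂ ⁻¹' {stoneCechUnit y} := by
          simp only [Set.mem_preimage, Set.mem_singleton_iff]; exact hw₂ y
        have := hq2 y h hmem
        simp only [Set.mem_preimage, Set.mem_singleton_iff] at this
        rw [this]
        simp only [hfdef, dif_neg h]
    have hopen : IsOpen (Set.range e₂) := by
      rw [← compl_compl (Set.range e₂)]
      exact hc₂.isClosed.isOpen_compl
    refine ⟨f, ?_, hfe⟩
    rw [continuous_iff_continuousAt]
    intro p
    by_cases hp : p ∈ Set.range e₂
    · -- continuity on the open set range e₂
      have hcont : ContinuousOn f (Set.range e₂) := by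
        rw [continuousOn_iff_continuous_restrict]
        have hre : Set.domRestrict (Set.range e₂) f
            = e₁ ∘ he₂.toHomeomorph.symm := by
          funext y
          obtain ⟨x, hx⟩ := y.2
          have hy : y = he₂.toHomeomorph x := by
            apply Subtype.ext
            simpa [IsEmbedding.toHomeomorph_apply_coe] using hx.symm
          rw [hy]
          simp only [Function.comp_apply, Homeomorph.symm_apply_apply]
          have : (he₂.toHomeomorph x : Y₂) = e₂ x := by
            simp [IsEmbedding.toHomeomorph_apply_coe]
          simp only [Set.restrict_apply, this]
          exact congrFun hfe x
        rw [hre]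
        exact he₁.continuous.comp (Homeomorph.continuous _)
      exact hcont.continuousAt (hopen.mem_nhds hp)
    · -- continuity at remainder points via ultrafilters
      rw [continuousAt_iff_ultrafilter]
      intro 𝒰 h𝒰
      obtain ⟨w₀, -, hw₀⟩ := isCompact_univ.ultrafilter_le_nhds (𝒰.map w)
        (by simp)
      have hmapeq : Filter.map φ₂ (Filter.map w (𝒰 : Filter Y₂))
          = Filter.map stoneCechUnit (𝒰 : Filter Y₂) := by
        rw [Filter.map_map]
        exact congrArg (fun g => Filter.map g (𝒰 : Filter Y₂)) (funext hw₂)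
      have h2 : Tendsto φ₂ (Filter.map w (𝒰 : Filter Y₂)) (𝓝 (φ₂ w₀)) :=
        (hφ₂.tendsto w₀).mono_left hw₀
      have h2' : Tendsto φ₂ (Filter.map w (𝒰 : Filter Y₂)) (𝓝 (stoneCechUnit p)) := by
        rw [Tendsto, hmapeq]
        exact (continuous_stoneCechUnit.tendsto p).mono_left h𝒰
      have hne : (Filter.map w (𝒰 : Filter Y₂)).NeBot := Filter.map_neBot
      have heq : φ₂ w₀ = stoneCechUnit p := tendsto_nhds_unique h2 h2'
      have h3 : φ₁ w₀ = stoneCechUnit (f p) := by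
        have hmem : w₀ ∈ φ₂ ⁻¹' {stoneCechUnit p} := by
          simp only [Set.mem_preimage, Set.mem_singleton_iff]; exact heq
        have := hq2 p hp hmem
        simp only [Set.mem_preimage, Set.mem_singleton_iff] at this
        rw [this]
        simp only [hfdef, dif_neg hp]
      have h4 : Tendsto (stoneCechUnit ∘ f) (𝒰 : Filter Y₂) (𝓝 (stoneCechUnit (f p))) := by
        have hmapeq2 : Filter.map (stoneCechUnit ∘ f) (𝒰 : Filter Y₂)
            = Filter.map φ₁ (Filter.map w (𝒰 : Filter Y₂)) := by
          rw [Filter.map_map]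
          exact congrArg (fun g => Filter.map g (𝒰 : Filter Y₂)) (funext fun y => (hw₁ y).symm)
        rw [Tendsto, hmapeq2, ← h3]
        exact (hφ₁.tendsto w₀).mono_left hw₀
      exact tendsto_of_stoneCechUnit_tendsto h4
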